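/- Let C be a monoidal category such that the strong monoidal forgetful functor U : Z(C) → C from the Drinfeld center admits a left adjoint L. Equip F := L(𝟙_C) with the comonoid structure in Z(C) obtained by applying the oplax monoidal functor L (oplax monoidal by doctrinal adjunction, since its right adjoint U is strong monoidal) to the trivial comonoid 𝟙_C; explicitly, the comultiplication δ : F → F ⊗ F is the adjoint transpose of the composite 𝟙 ≅ 𝟙 ⊗ 𝟙 → U(F) ⊗ U(F) ≅ U(F ⊗ F) built from the unit of the adjunction L ⊣ U in both factors, and the counit is the transpose of the identity of 𝟙_C. Then F is braided cocommutative: c_{F,F} ∘ δ = δ, where c denotes the braiding of Z(C). -/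

import Mathlib

/-!
Let `C` be a monoidal category such that the strong monoidal forgetful functor
`U : Z(C) ⟶ C` from the Drinfeld center admits a left adjoint `L`.  Equip
`F := L(𝟙_C)` with the comultiplication `δ : F ⟶ F ⊗ F` which is the adjoint
transpose of the composite `𝟙 ≅ 𝟙 ⊗ 𝟙 ⟶ U F ⊗ U F ≅ U (F ⊗ F)` built from the
unit of the adjunction `L ⊣ U` in both factors (this is the comonoid structure
obtained by applying the oplax monoidal functor `L` to the trivial comonoid
`𝟙_C`; the counit is the transpose of the identity of `𝟙_C`).  Then `F` is
braided cocommutative: `c_{F,F} ∘ δ = δ` for the braiding `c` of the Drinfeld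
center.
-/

open CategoryTheory MonoidalCategory Functor.LaxMonoidal Functor.OplaxMonoidal

namespace Stmt1

variable {C : Type*} [Category C] [MonoidalCategory C]

/-- The canonical coalgebra `F = L(𝟙)` in the Drinfeld center. -/
noncomputable abbrev canonicalCoalgebra (L : C ⥤ Center C)
    (_ : L ⊣ Center.forget C) : Center C :=
  L.obj (𝟙_ C)

/-- The comultiplication on `F = L(𝟙)`: the adjoint transpose of the composite
`𝟙 ≅ 𝟙 ⊗ 𝟙 ⟶ U F ⊗ U F ≅ U (F ⊗ F)` built from the unit of `L ⊣ U` in both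
factors. -/
noncomputable def canonicalComul (L : C ⥤ Center C) (adj : L ⊣ Center.forget C) :
    canonicalCoalgebra L adj ⟶ canonicalCoalgebra L adj ⊗ canonicalCoalgebra L adj :=
  (adj.homEquiv (𝟙_ C) (canonicalCoalgebra L adj ⊗ canonicalCoalgebra L adj)).symm
    ((λ_ (𝟙_ C)).inv ≫ (adj.unit.app (𝟙_ C) ⊗ₘ adj.unit.app (𝟙_ C)) ≫
      (Functor.Monoidal.μIso (Center.forget C) (canonicalCoalgebra L adj)
        (canonicalCoalgebra L adj)).hom)

/-- The counit on `F = L(𝟙)`: the adjoint transpose of the identity of `𝟙_C`. -/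
noncomputable def canonicalCounit (L : C ⥤ Center C) (adj : L ⊣ Center.forget C) :
    canonicalCoalgebra L adj ⟶ 𝟙_ (Center C) :=
  (adj.homEquiv (𝟙_ C) (𝟙_ (Center C))).symm
    ((Functor.Monoidal.εIso (Center.forget C)).hom)

/-- The half-braiding of any object of the center, evaluated at the unit, is
given by the unitors. -/
theorem halfBraiding_unit (X : Center C) :
    (X.2.β (𝟙_ C)).hom = (ρ_ X.1).hom ≫ (λ_ X.1).inv := by
  rw [Iso.eq_comp_inv]
  exact congrArg Center.Hom.f (braiding_leftUnitor (C := Center C) X)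

/-- The canonical coalgebra `F = L(𝟙)` in the Drinfeld center is braided
cocommutative. -/
theorem canonicalCoalgebra_braided_cocommutative
    (L : C ⥤ Center C) (adj : L ⊣ Center.forget C) :
    canonicalComul L adj ≫
        (β_ (canonicalCoalgebra L adj) (canonicalCoalgebra L adj)).hom =
      canonicalComul L adj := by
  unfold canonicalComul
  rw [← Adjunction.homEquiv_naturality_right_symm]
  congr 1
  set F := canonicalCoalgebra L adj with hF
  set η : 𝟙_ C ⟶ F.1 := adj.unit.app (𝟙_ C) with hη
  have key : (η ⊗ₘ η) ≫ (F.2.β F.1).hom = η ⊗ₘ η := by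
    calc (η ⊗ₘ η) ≫ (F.2.β F.1).hom
        = (η ▷ 𝟙_ C) ≫ ((F.1 ◁ η) ≫ (F.2.β F.1).hom) := by
          rw [MonoidalCategory.tensorHom_def, Category.assoc]
      _ = (η ▷ 𝟙_ C) ≫ (F.2.β (𝟙_ C)).hom ≫ (η ▷ F.1) := by
          rw [HalfBraiding.naturality]
      _ = ((η ▷ 𝟙_ C) ≫ (ρ_ F.1).hom) ≫ (λ_ F.1).inv ≫ (η ▷ F.1) := by
          rw [halfBraiding_unit]; simp only [Category.assoc]
      _ = (ρ_ (𝟙_ C)).hom ≫ (η ≫ (λ_ F.1).inv) ≫ (η ▷ F.1) := by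
          rw [rightUnitor_naturality]; simp only [Category.assoc]
      _ = (ρ_ (𝟙_ C)).hom ≫ ((λ_ (𝟙_ C)).inv ≫ (𝟙_ C ◁ η)) ≫ (η ▷ F.1) := by
          rw [leftUnitor_inv_naturality]
      _ = η ⊗ₘ η := by
          rw [← unitors_equal]; simp [tensorHom_def']
  have key' : (η ⊗ₘ η) ≫ (β_ F F).hom.f = η ⊗ₘ η := key
  simp only [Category.assoc]
  exact show (λ_ (𝟙_ C)).inv ≫ (η ⊗ₘ η) ≫ 𝟙 (F.1 ⊗ F.1) ≫ (β_ F F).hom.f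
      = (λ_ (𝟙_ C)).inv ≫ (η ⊗ₘ η) ≫ 𝟙 (F.1 ⊗ F.1) by
    erw [Category.id_comp, key', Category.comp_id]
    rfl

end Stmt1
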